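/- For every natural number n ≥ 1, n divides Σ_{j=n}^{2n−1} C(3n, n+1+j)·C(j−1, j−n). -/

import Mathlib

open Polynomial Finset

/-- Sum over `Icc a (a+b)` as a sum over `range (b+1)`. -/
private lemma sum_Icc_shift {M : Type*} [AddCommMonoid M] (a b : ℕ) (f : ℕ → M) :
    ∑ j ∈ Icc a (a + b), f j = ∑ k ∈ range (b + 1), f (a + k) := by
  induction b with
  | zero => simp
  | succ b ih =>
    have h : a + (b + 1) = (a + b) + 1 := by omega
    rw [h, Finset.sum_Icc_succ_top (by omega), ih]
    simp [Finset.sum_range_succ, Nat.add_assoc]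

/-- Hockey stick. -/
private lemma hockey (m k : ℕ) :
    ∑ j ∈ range (k + 1), Nat.choose (m + j) j = Nat.choose (m + 1 + k) k := by
  have h1 : ∀ j, Nat.choose (m + j) j = Nat.choose (m + j) m := by
    intro j
    have := Nat.choose_symm (n := m + j) (k := m) (Nat.le_add_right m j)
    simpa using this
  simp_rw [h1]
  rw [← sum_Icc_shift m k (fun i => Nat.choose i m), Nat.sum_Icc_choose]
  have : m + k + 1 = m + 1 + k := by omega
  rw [this]
  have h2 := Nat.choose_symm (show m + 1 ≤ m + 1 + k by omega)
  simpa [show m + 1 + k - (m + 1) = k by omega] using h2.symm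

/-- Coefficients of powers of the truncated geometric series. -/
private lemma geom_pow_coeff (N : ℕ) : ∀ (m k : ℕ), k < N →
    (((∑ i ∈ range N, (X : ℤ[X]) ^ i)) ^ (m + 1)).coeff k = Nat.choose (m + k) k := by
  intro m
  induction m with
  | zero =>
    intro k hk
    simp only [pow_one, finset_sum_coeff, coeff_X_pow, zero_add, Nat.choose_self]
    rw [Finset.sum_ite_eq (range N) k (fun _ => (1 : ℤ))]
    simp [Finset.mem_range.mpr hk]
  | succ m ih =>
    intro k hk
    rw [pow_succ, Polynomial.coeff_mul, Finset.Nat.sum_antidiagonal_eq_sum_range_succ_mk]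
    have hterm : ∀ i ∈ range (k + 1),
        ((∑ i ∈ range N, (X : ℤ[X]) ^ i) ^ (m + 1)).coeff i *
          (∑ i ∈ range N, (X : ℤ[X]) ^ i).coeff (k - i)
          = (Nat.choose (m + i) i : ℤ) := by
      intro i hi
      rw [Finset.mem_range] at hi
      have h1 : ((∑ i ∈ range N, (X : ℤ[X]) ^ i) ^ (m + 1)).coeff i = Nat.choose (m + i) i :=
        ih i (by omega)
      have h2 : (∑ i ∈ range N, (X : ℤ[X]) ^ i).coeff (k - i) = 1 := by
        simp only [finset_sum_coeff, coeff_X_pow]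
        rw [Finset.sum_ite_eq (range N) (k - i) (fun _ => (1 : ℤ))]
        simp [Finset.mem_range.mpr (show k - i < N by omega)]
      rw [h1, h2, mul_one]
    rw [Finset.sum_congr rfl hterm, ← Nat.cast_sum, hockey m k]

/-- Frobenius congruence for integer polynomials. -/
private lemma frob_cong (p : ℕ) (hp : p.Prime) (F : ℤ[X]) :
    ∃ r : ℤ[X], F ^ p = Polynomial.expand ℤ p F + Polynomial.C (p : ℤ) * r := by
  haveI : Fact p.Prime := ⟨hp⟩
  have hmap : Polynomial.map (Int.castRingHom (ZMod p)) (F ^ p - Polynomial.expand ℤ p F) = 0 := by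
    rw [Polynomial.map_sub, Polynomial.map_pow, Polynomial.map_expand]
    have := Polynomial.map_frobenius_expand p (Polynomial.map (Int.castRingHom (ZMod p)) F)
    rw [ZMod.frobenius_zmod, Polynomial.map_id] at this
    rw [this, sub_self]
  have hdvd : Polynomial.C (p : ℤ) ∣ F ^ p - Polynomial.expand ℤ p F := by
    rw [Polynomial.C_dvd_iff_dvd_coeff]
    intro i
    have : ((F ^ p - Polynomial.expand ℤ p F).coeff i : ZMod p) = 0 := by
      have h2 := congrArg (fun g => Polynomial.coeff g i) hmap
      simp only [Polynomial.coeff_map, Polynomial.coeff_zero] at h2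
      exact h2
    exact_mod_cast (ZMod.intCast_zmod_eq_zero_iff_dvd _ p).mp this
  obtain ⟨r, hr⟩ := hdvd
  exact ⟨r, by linear_combination hr⟩

/-- Number-theoretic valuation lemma. -/
private lemma choose_pow_dvd (p a m i : ℕ) (hp : p.Prime) (hm : p ^ a ∣ m)
    (hi1 : 1 ≤ i) (him : i ≤ m) : p ^ (a + 1) ∣ Nat.choose m i * p ^ i := by
  -- i * C(m, i) = m * C(m-1, i-1)
  have hkey : m * Nat.choose (m - 1) (i - 1) = Nat.choose m i * i := by
    have := Nat.add_one_mul_choose_eq (m - 1) (i - 1)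
    have h1 : m - 1 + 1 = m := by omega
    have h2 : i - 1 + 1 = i := by omega
    rwa [h1, h2] at this
  have hdvd1 : p ^ a ∣ Nat.choose m i * i := hkey ▸ Dvd.dvd.mul_right hm _
  set v := i.factorization p with hv
  have hipos : 0 < i := hi1
  have hpv : p ^ v ∣ i := Nat.ordProj_dvd i p
  have hvle : v ≤ i - 1 := by
    have h1 : p ^ v ≤ i := Nat.le_of_dvd hipos hpv
    have h2 : v < p ^ v := Nat.lt_pow_self (n := v) hp.one_lt
    omega
  obtain ⟨u, hu⟩ := hpv
  have hu0 : u ≠ 0 := by rintro rfl; simp at hu; omega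
  have hpu : ¬ p ∣ u := by
    intro hd
    obtain ⟨w, hw⟩ := hd
    have : p ^ (v + 1) ∣ i := ⟨w, by rw [hu, hw]; ring⟩
    exact Nat.pow_succ_factorization_not_dvd (by omega) hp this
  have hcop : Nat.Coprime (p ^ a) u :=
    Nat.Coprime.pow_left a ((hp.coprime_iff_not_dvd.mpr hpu))
  have hdvd2 : p ^ a ∣ Nat.choose m i * p ^ v := by
    apply hcop.dvd_of_dvd_mul_right
    have : Nat.choose m i * p ^ v * u = Nat.choose m i * i := by rw [hu]; ring
    rw [this]; exact hdvd1
  have hdvd3 : Nat.choose m i * p ^ v ∣ Nat.choose m i * p ^ (i - 1) :=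
    Nat.mul_dvd_mul_left _ (Nat.pow_dvd_pow p hvle)
  have : p ^ a ∣ Nat.choose m i * p ^ (i - 1) := hdvd2.trans hdvd3
  have hfin : p ^ (a + 1) ∣ Nat.choose m i * p ^ (i - 1) * p := by
    rw [pow_succ]; exact Nat.mul_dvd_mul this dvd_rfl
  have heq : Nat.choose m i * p ^ (i - 1) * p = Nat.choose m i * p ^ i := by
    rw [mul_assoc, ← pow_succ]
    congr 2
    omega
  rwa [heq] at hfin

private lemma key_dvd (F : ℤ[X]) (n p a : ℕ) (hp : p.Prime) (hn : 0 < n)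
    (ha : p ^ (a + 1) ∣ n) : (p : ℤ) ^ (a + 1) ∣ (F ^ n).coeff (n - 1) := by
  have hpn : p ∣ n := dvd_trans (dvd_pow_self p (Nat.succ_ne_zero a)) ha
  obtain ⟨m, hm⟩ := hpn
  have hm0 : 0 < m := by
    rcases Nat.eq_zero_or_pos m with h | h
    · subst h; omega
    · exact h
  have hma : p ^ a ∣ m := by
    have h1 : p * p ^ a ∣ p * m := by
      rw [← pow_succ', ← hm]; exact ha
    exact (Nat.mul_dvd_mul_iff_left hp.pos).mp h1
  obtain ⟨r, hr⟩ := frob_cong p hp F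
  have hFn : F ^ n = (Polynomial.expand ℤ p F + Polynomial.C (p : ℤ) * r) ^ m := by
    rw [hm, pow_mul, hr]
  rw [hFn, add_pow, finset_sum_coeff]
  apply Finset.dvd_sum
  intro k hk
  rw [Finset.mem_range] at hk
  rcases eq_or_lt_of_le (Nat.lt_succ_iff.mp hk) with hkm | hkm
  · -- k = m : the pure expanded term has zero coefficient at n - 1
    subst hkm
    have h2 : 2 ≤ p := hp.two_le
    have hnd : ¬ p ∣ (n - 1) := by
      intro hd
      have h1 : p ∣ n - (n - 1) := Nat.dvd_sub ⟨_, hm⟩ hd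
      rw [show n - (n - 1) = 1 from by omega] at h1
      have := Nat.le_of_dvd one_pos h1
      omega
    simp only [Nat.sub_self, pow_zero, mul_one, Nat.choose_self, Nat.cast_one]
    rw [← map_pow, Polynomial.coeff_expand hp.pos, if_neg hnd]
    exact dvd_zero _
  · -- k < m : the term is divisible by p^(a+1) as a polynomial
    have hnat : p ^ (a + 1) ∣ Nat.choose m k * p ^ (m - k) := by
      have h1 := choose_pow_dvd p a m (m - k) hp hma (by omega) (by omega)
      rwa [Nat.choose_symm (le_of_lt hkm)] at h1
    have hdvd : ((p : ℤ)) ^ (a + 1) ∣ (p : ℤ) ^ (m - k) * (Nat.choose m k : ℤ) := by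
      have h3 := Int.natCast_dvd_natCast.mpr hnat
      push_cast at h3
      rwa [mul_comm] at h3
    have hCd : Polynomial.C ((p : ℤ) ^ (a + 1)) ∣
        Polynomial.expand ℤ p F ^ k * (Polynomial.C (p : ℤ) * r) ^ (m - k)
          * ((Nat.choose m k : ℕ) : ℤ[X]) := by
      have h4 : Polynomial.C ((p : ℤ) ^ (a + 1)) ∣
          Polynomial.C ((p : ℤ) ^ (m - k) * (Nat.choose m k : ℤ)) :=
        map_dvd Polynomial.C hdvd
      refine dvd_trans h4 ⟨Polynomial.expand ℤ p F ^ k * r ^ (m - k), ?_⟩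
      rw [mul_pow, ← Polynomial.C_pow, ← Polynomial.C_eq_natCast, map_mul]
      ring
    have h5 := (Polynomial.C_dvd_iff_dvd_coeff _ _).mp hCd (n - 1)
    simpa using h5

private lemma sum_reindex (n : ℕ) (hn : 1 ≤ n) :
    ∑ j ∈ Finset.Icc n (2 * n - 1),
        Nat.choose (3 * n) (n + 1 + j) * Nat.choose (j - 1) (j - n)
      = ∑ i ∈ range n, Nat.choose (3 * n) i
          * Nat.choose (n - 1 + (n - 1 - i)) (n - 1 - i) := by
  have h2n : 2 * n - 1 = n + (n - 1) := by omega
  rw [h2n, sum_Icc_shift, show n - 1 + 1 = n from by omega]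
  rw [← Finset.sum_range_reflect
    (fun i => Nat.choose (3 * n) i * Nat.choose (n - 1 + (n - 1 - i)) (n - 1 - i)) n]
  refine Finset.sum_congr rfl fun k hk => ?_
  rw [Finset.mem_range] at hk
  have e2 : n + k - 1 = n - 1 + k := by omega
  have e3 : n + k - n = k := by omega
  have e4 : n - 1 - (n - 1 - k) = k := by omega
  rw [e2, e3, e4]
  congr 1
  have h := Nat.choose_symm (show n + 1 + (n + k) ≤ 3 * n from by omega)
  rw [show 3 * n - (n + 1 + (n + k)) = n - 1 - k from by omega] at h
  exact h.symm

private lemma coeff_eq (n : ℕ) (hn : 1 ≤ n) :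
    (((X + 1 : ℤ[X]) ^ 3 * ∑ i ∈ range n, X ^ i) ^ n).coeff (n - 1)
      = ((∑ i ∈ range n, Nat.choose (3 * n) i
          * Nat.choose (n - 1 + (n - 1 - i)) (n - 1 - i) : ℕ) : ℤ) := by
  obtain ⟨m, rfl⟩ : ∃ m, n = m + 1 := ⟨n - 1, by omega⟩
  simp only [Nat.add_sub_cancel]
  rw [mul_pow, ← pow_mul, Polynomial.coeff_mul,
    Finset.Nat.sum_antidiagonal_eq_sum_range_succ_mk, Nat.cast_sum]
  refine Finset.sum_congr rfl fun i hi => ?_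
  rw [Finset.mem_range] at hi
  rw [coeff_X_add_one_pow, geom_pow_coeff (m + 1) m (m - i) (by omega)]
  push_cast
  ring

theorem stmt_9 (n : ℕ) (hn : 1 ≤ n) :
    n ∣ ∑ j ∈ Finset.Icc n (2 * n - 1),
      Nat.choose (3 * n) (n + 1 + j) * Nat.choose (j - 1) (j - n) := by
  rw [Nat.dvd_iff_prime_pow_dvd_dvd]
  intro p k hp hpk
  cases k with
  | zero => simp
  | succ a =>
    have hp' : p.Prime := hp
    have hkey := key_dvd ((X + 1 : ℤ[X]) ^ 3 * ∑ i ∈ range n, X ^ i) n p a hp'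
      (by omega) hpk
    rw [coeff_eq n hn, ← sum_reindex n hn] at hkey
    exact_mod_cast (Int.natCast_dvd_natCast (m := p ^ (a + 1))).mp (by exact_mod_cast hkey)
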